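/- If Γ ⊢_{HWFD̂} A then Γ ⊢_{NWFD̂} A, and conversely if Γ ⊢_{NWFD̂} A then Γ ⊢_{HWFD̂} A; that is, the restricted Hilbert system WFD̂ and the natural deduction system NWFD̂ derive the same formulas from any set of assumptions Γ. -/

import Mathlib

/-- Formulas of subintuitionistic propositional logic. -/
inductive Fml : Type
  | atom : ℕ → Fml
  | bot  : Fml
  | and  : Fml → Fml → Fml
  | or   : Fml → Fml → Fml
  | imp  : Fml → Fml → Fml
deriving DecidableEq

/-- `A ↔ B` abbreviates `(A → B) ∧ (B → A)`. -/
def Fml.biimp (A B : Fml) : Fml := (A.imp B).and (B.imp A)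

/-- The extra axiom schemes / rules among I, C, D, Ĉ, D̂, N, N₂. -/
inductive ExtAx : Type
  | I | C | D | Chat | Dhat | N | N2
deriving DecidableEq

/-- Theorems of the Hilbert system WF extended with the schemes/rules in `E`
(derivations with no assumptions; all rules unrestricted here). -/
inductive HThm (E : Set ExtAx) : Fml → Prop
  | ax1 (A B : Fml)   : HThm E (A.imp (A.or B))
  | ax2 (A B : Fml)   : HThm E (B.imp (A.or B))
  | ax3 (A B : Fml)   : HThm E ((A.and B).imp A)
  | ax4 (A B : Fml)   : HThm E ((A.and B).imp B)
  | ax7 (A B C : Fml) : HThm E ((A.and (B.or C)).imp ((A.and B).or (A.and C)))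
  | ax8 (A : Fml)     : HThm E (A.imp A)
  | ax14 (A : Fml)    : HThm E (Fml.bot.imp A)
  | mp {A B : Fml}    : HThm E A → HThm E (A.imp B) → HThm E B
  | af {A : Fml} (B : Fml) : HThm E A → HThm E (B.imp A)
  | tr {A B C : Fml}  : HThm E (A.imp B) → HThm E (B.imp C) → HThm E (A.imp C)
  | rc {A B C : Fml}  : HThm E (A.imp B) → HThm E (A.imp C) → HThm E (A.imp (B.and C))
  | rd {A B C : Fml}  : HThm E (A.imp C) → HThm E (B.imp C) → HThm E ((A.or B).imp C)
  | conj {A B : Fml}  : HThm E A → HThm E B → HThm E (A.and B)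
  | re {A B C D : Fml} : HThm E (A.biimp B) → HThm E (C.biimp D) →
      HThm E ((A.imp C).biimp (B.imp D))
  | axI (A B C : Fml) : ExtAx.I ∈ E →
      HThm E (((A.imp B).and (B.imp C)).imp (A.imp C))
  | axC (A B C : Fml) : ExtAx.C ∈ E →
      HThm E (((A.imp B).and (A.imp C)).imp (A.imp (B.and C)))
  | axD (A B C : Fml) : ExtAx.D ∈ E →
      HThm E (((A.imp C).and (B.imp C)).imp ((A.or B).imp C))
  | axChat (A B C : Fml) : ExtAx.Chat ∈ E →
      HThm E ((A.imp (B.and C)).imp ((A.imp B).and (A.imp C)))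
  | axDhat (A B C : Fml) : ExtAx.Dhat ∈ E →
      HThm E (((A.or B).imp C).imp ((A.imp C).and (B.imp C)))
  | ruleN {A B C D : Fml} : ExtAx.N ∈ E →
      HThm E (A.imp (B.or C)) → HThm E (C.imp (A.or D)) →
      HThm E ((A.and D).imp B) → HThm E ((C.and B).imp D) →
      HThm E ((A.imp B).biimp (C.imp D))
  | ruleN2 {A B C D : Fml} : ExtAx.N2 ∈ E →
      HThm E (C.imp (A.or D)) → HThm E ((C.and B).imp D) →
      HThm E ((A.imp B).imp (C.imp D))

/-- Restricted derivability from assumptions in the Hilbert system WF + `E`: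
besides assumptions and theorems, only the conjunction rule is unrestricted, and
modus ponens may be used only when the major premise `A → B` is a theorem
(derived with no assumptions); all other rules are confined to theorems. -/
inductive HDer (E : Set ExtAx) (Γ : Set Fml) : Fml → Prop
  | hyp {A : Fml}  : A ∈ Γ → HDer E Γ A
  | thm {A : Fml}  : HThm E A → HDer E Γ A
  | conj {A B : Fml} : HDer E Γ A → HDer E Γ B → HDer E Γ (A.and B)
  | mp {A B : Fml} : HDer E Γ A → HThm E (A.imp B) → HDer E Γ B

/-- Tags for the optional implication-introduction rules of the natural
deduction systems. -/
inductive NRule : Type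
  | impI1 | impI2 | impN | impN2 | impChat | impDhat | impAnd | impOr | impTr
deriving DecidableEq

/-- Natural deduction derivations for the system with optional rules `R`.
`Deriv R Γ A` is a derivation of `A` all of whose open assumptions lie in `Γ`. -/
inductive Deriv (R : Set NRule) : Set Fml → Fml → Type
  | hyp (Γ : Set Fml) (A : Fml) : A ∈ Γ → Deriv R Γ A
  | andI {Γ : Set Fml} {A B : Fml} :
      Deriv R Γ A → Deriv R Γ B → Deriv R Γ (A.and B)
  | andE1 {Γ : Set Fml} {A B : Fml} :
      Deriv R Γ (A.and B) → Deriv R Γ A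
  | andE2 {Γ : Set Fml} {A B : Fml} :
      Deriv R Γ (A.and B) → Deriv R Γ B
  | orI1 {Γ : Set Fml} {A : Fml} (B : Fml) :
      Deriv R Γ A → Deriv R Γ (A.or B)
  | orI2 {Γ : Set Fml} (A : Fml) {B : Fml} :
      Deriv R Γ B → Deriv R Γ (A.or B)
  | orE {Γ : Set Fml} {A B C : Fml} :
      Deriv R Γ (A.or B) → Deriv R (insert A Γ) C → Deriv R (insert B Γ) C →
      Deriv R Γ C
  | botE {Γ : Set Fml} (A : Fml) :
      Deriv R Γ Fml.bot → Deriv R Γ A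
  | impI {Γ : Set Fml} {A B : Fml} :
      Deriv R {A} B → Deriv R Γ (A.imp B)
  | impE {Γ : Set Fml} {A B : Fml} :
      Deriv R Γ A → Deriv R (∅ : Set Fml) (A.imp B) → Deriv R Γ B
  | impI1 {Γ : Set Fml} {A B D : Fml} :
      NRule.impI1 ∈ R → Deriv R {B} D → Deriv R {D} B →
      Deriv R Γ ((A.imp B).imp (A.imp D))
  | impI2 {Γ : Set Fml} {A B D : Fml} :
      NRule.impI2 ∈ R → Deriv R {B} D → Deriv R {D} B →
      Deriv R Γ ((B.imp A).imp (D.imp A))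
  | impIN {Γ : Set Fml} {A B C D : Fml} :
      NRule.impN ∈ R →
      Deriv R {A} (C.or B) → Deriv R {D} B → Deriv R {C} (A.or D) → Deriv R {B} D →
      Deriv R Γ ((A.imp B).imp (C.imp D))
  | impIN2 {Γ : Set Fml} {A B C D : Fml} :
      NRule.impN2 ∈ R →
      Deriv R {C} (A.or D) → Deriv R {B} D →
      Deriv R Γ ((A.imp B).imp (C.imp D))
  | impIChat {Γ : Set Fml} {A B : Fml} (C : Fml) :
      NRule.impChat ∈ R → Deriv R {A} B →
      Deriv R Γ ((C.imp A).imp (C.imp B))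
  | impIDhat {Γ : Set Fml} {A B : Fml} (C : Fml) :
      NRule.impDhat ∈ R → Deriv R {A} B →
      Deriv R Γ ((B.imp C).imp (A.imp C))
  | impIAnd {Γ : Set Fml} {A B C : Fml} :
      NRule.impAnd ∈ R → Deriv R Γ (A.imp B) → Deriv R Γ (A.imp C) →
      Deriv R Γ (A.imp (B.and C))
  | impIOr {Γ : Set Fml} {A B C : Fml} :
      NRule.impOr ∈ R → Deriv R Γ (A.imp C) → Deriv R Γ (B.imp C) →
      Deriv R Γ ((A.or B).imp C)
  | impITr {Γ : Set Fml} {A B C : Fml} :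
      NRule.impTr ∈ R → Deriv R Γ (A.imp B) → Deriv R Γ (B.imp C) →
      Deriv R Γ (A.imp C)

/-- `Γ ⊢ A` in the natural deduction system with optional rules `R`. -/
def NDer (R : Set NRule) (Γ : Set Fml) (A : Fml) : Prop :=
  Nonempty (Deriv R Γ A)

/-- A derivation may serve as the major premise of an elimination rule in a
normal derivation: it is an assumption or ends with an elimination rule
different from ∨E (i.e. ∧E or →E). -/
def Deriv.MajorOK : ∀ {R : Set NRule} {Γ : Set Fml} {A : Fml}, Deriv R Γ A → Prop
  | _, _, _, .hyp _ _ _ => True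
  | _, _, _, .andE1 _   => True
  | _, _, _, .andE2 _   => True
  | _, _, _, .impE _ _  => True
  | _, _, _, _          => False

/-- A derivation is normal if every major premise of an elimination rule is
either an assumption or the conclusion of an elimination rule different
from ∨E. -/
def Deriv.Normal {R : Set NRule} : ∀ {Γ : Set Fml} {A : Fml}, Deriv R Γ A → Prop
  | _, _, .hyp _ _ _ => True
  | _, _, .andI d e => d.Normal ∧ e.Normal
  | _, _, .andE1 d => d.MajorOK ∧ d.Normal
  | _, _, .andE2 d => d.MajorOK ∧ d.Normal
  | _, _, .orI1 _ d => d.Normal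
  | _, _, .orI2 _ d => d.Normal
  | _, _, .orE d e f => d.MajorOK ∧ d.Normal ∧ e.Normal ∧ f.Normal
  | _, _, .botE _ d => d.Normal
  | _, _, .impI d => d.Normal
  | _, _, .impE d e => e.MajorOK ∧ d.Normal ∧ e.Normal
  | _, _, .impI1 _ d e => d.Normal ∧ e.Normal
  | _, _, .impI2 _ d e => d.Normal ∧ e.Normal
  | _, _, .impIN _ d e f g => d.Normal ∧ e.Normal ∧ f.Normal ∧ g.Normal
  | _, _, .impIN2 _ d e => d.Normal ∧ e.Normal
  | _, _, .impIChat _ _ d => d.Normal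
  | _, _, .impIDhat _ _ d => d.Normal
  | _, _, .impIAnd _ d e => d.Normal ∧ e.Normal
  | _, _, .impIOr _ d e => d.Normal ∧ e.Normal
  | _, _, .impITr _ d e => d.Normal ∧ e.Normal

section AuxWFDhat

abbrev E0 : Set ExtAx := {ExtAx.Dhat}
abbrev R0 : Set NRule := {NRule.impI1, NRule.impI2, NRule.impDhat}

/-- Weakening for natural deduction derivations. -/
def Deriv.wk {R : Set NRule} : ∀ {Γ Δ : Set Fml} {A : Fml},
    Deriv R Γ A → Γ ⊆ Δ → Deriv R Δ A
  | _, _, _, .hyp _ _ h, hs => .hyp _ _ (hs h)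
  | _, _, _, .andI d e, hs => .andI (d.wk hs) (e.wk hs)
  | _, _, _, .andE1 d, hs => .andE1 (d.wk hs)
  | _, _, _, .andE2 d, hs => .andE2 (d.wk hs)
  | _, _, _, .orI1 B d, hs => .orI1 B (d.wk hs)
  | _, _, _, .orI2 A d, hs => .orI2 A (d.wk hs)
  | _, _, _, .orE d e f, hs =>
      .orE (d.wk hs) (e.wk (Set.insert_subset_insert hs))
        (f.wk (Set.insert_subset_insert hs))
  | _, _, _, .botE A d, hs => .botE A (d.wk hs)
  | _, _, _, .impI d, _ => .impI d
  | _, _, _, .impE d e, hs => .impE (d.wk hs) e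
  | _, _, _, .impI1 h d e, _ => .impI1 h d e
  | _, _, _, .impI2 h d e, _ => .impI2 h d e
  | _, _, _, .impIN h a b c d, _ => .impIN h a b c d
  | _, _, _, .impIN2 h a b, _ => .impIN2 h a b
  | _, _, _, .impIChat C h d, _ => .impIChat C h d
  | _, _, _, .impIDhat C h d, _ => .impIDhat C h d
  | _, _, _, .impIAnd h d e, hs => .impIAnd h (d.wk hs) (e.wk hs)
  | _, _, _, .impIOr h d e, hs => .impIOr h (d.wk hs) (e.wk hs)
  | _, _, _, .impITr h d e, hs => .impITr h (d.wk hs) (e.wk hs)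

def dhyp1 (A : Fml) : Deriv R0 {A} A := .hyp _ _ rfl

lemma memI1 : NRule.impI1 ∈ R0 := Or.inl rfl
lemma memI2 : NRule.impI2 ∈ R0 := Or.inr (Or.inl rfl)
lemma memIDhat : NRule.impDhat ∈ R0 := Or.inr (Or.inr rfl)

lemma thmToN {A : Fml} (h : HThm E0 A) : NDer R0 ∅ A := by
  induction h with
  | ax1 A B => exact ⟨.impI (.orI1 B (dhyp1 A))⟩
  | ax2 A B => exact ⟨.impI (.orI2 A (dhyp1 B))⟩
  | ax3 A B => exact ⟨.impI (.andE1 (dhyp1 (A.and B)))⟩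
  | ax4 A B => exact ⟨.impI (.andE2 (dhyp1 (A.and B)))⟩
  | ax7 A B C =>
      refine ⟨.impI (.orE (.andE2 (dhyp1 (A.and (B.or C)))) ?_ ?_)⟩
      · exact .orI1 _ (.andI
          (.andE1 (.hyp _ _ (Set.mem_insert_of_mem _ rfl)))
          (.hyp _ _ (Set.mem_insert _ _)))
      · exact .orI2 _ (.andI
          (.andE1 (.hyp _ _ (Set.mem_insert_of_mem _ rfl)))
          (.hyp _ _ (Set.mem_insert _ _)))
  | ax8 A => exact ⟨.impI (dhyp1 A)⟩
  | ax14 A => exact ⟨.impI (.botE A (dhyp1 Fml.bot))⟩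
  | mp _ _ ih1 ih2 =>
      obtain ⟨d1⟩ := ih1; obtain ⟨d2⟩ := ih2
      exact ⟨.impE d1 d2⟩
  | af B _ ih =>
      obtain ⟨d⟩ := ih
      exact ⟨.impI (d.wk (Set.empty_subset _))⟩
  | tr _ _ ih1 ih2 =>
      obtain ⟨d1⟩ := ih1; obtain ⟨d2⟩ := ih2
      exact ⟨.impI (.impE (.impE (dhyp1 _) d1) d2)⟩
  | rc _ _ ih1 ih2 =>
      obtain ⟨d1⟩ := ih1; obtain ⟨d2⟩ := ih2
      exact ⟨.impI (.andI (.impE (dhyp1 _) d1) (.impE (dhyp1 _) d2))⟩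
  | rd _ _ ih1 ih2 =>
      obtain ⟨d1⟩ := ih1; obtain ⟨d2⟩ := ih2
      exact ⟨.impI (.orE (dhyp1 _)
        (.impE (.hyp _ _ (Set.mem_insert _ _)) d1)
        (.impE (.hyp _ _ (Set.mem_insert _ _)) d2))⟩
  | conj _ _ ih1 ih2 =>
      obtain ⟨d1⟩ := ih1; obtain ⟨d2⟩ := ih2
      exact ⟨.andI d1 d2⟩
  | @re A B C D _ _ ih1 ih2 =>
      obtain ⟨d1⟩ := ih1; obtain ⟨d2⟩ := ih2
      -- d1 : (A→B)∧(B→A), d2 : (C→D)∧(D→C)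
      have dAB : Deriv R0 {A} B := .impE (dhyp1 A) (.andE1 d1)
      have dBA : Deriv R0 {B} A := .impE (dhyp1 B) (.andE2 d1)
      have dCD : Deriv R0 {C} D := .impE (dhyp1 C) (.andE1 d2)
      have dDC : Deriv R0 {D} C := .impE (dhyp1 D) (.andE2 d2)
      have s1 : Deriv R0 (∅ : Set Fml) ((A.imp C).imp (A.imp D)) :=
        .impI1 memI1 dCD dDC
      have s2 : Deriv R0 (∅ : Set Fml) ((A.imp D).imp (B.imp D)) :=
        .impI2 memI2 dAB dBA
      have s3 : Deriv R0 (∅ : Set Fml) ((B.imp D).imp (B.imp C)) :=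
        .impI1 memI1 dDC dCD
      have s4 : Deriv R0 (∅ : Set Fml) ((B.imp C).imp (A.imp C)) :=
        .impI2 memI2 dBA dAB
      exact ⟨.andI
        (.impI (.impE (.impE (dhyp1 (A.imp C)) s1) s2))
        (.impI (.impE (.impE (dhyp1 (B.imp D)) s3) s4))⟩
  | axI A B C h => simp at h
  | axC A B C h => simp at h
  | axD A B C h => simp at h
  | axChat A B C h => simp at h
  | axDhat A B C _ =>
      have dA : Deriv R0 (∅ : Set Fml) (((A.or B).imp C).imp (A.imp C)) :=
        .impIDhat C memIDhat (.orI1 B (dhyp1 A))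
      have dB : Deriv R0 (∅ : Set Fml) (((A.or B).imp C).imp (B.imp C)) :=
        .impIDhat C memIDhat (.orI2 A (dhyp1 B))
      exact ⟨.impI (.andI (.impE (dhyp1 _) dA) (.impE (dhyp1 _) dB))⟩
  | ruleN h => simp at h
  | ruleN2 h => simp at h

/-- commutativity of conjunction -/
lemma thmComm (A B : Fml) : HThm E0 ((A.and B).imp (B.and A)) :=
  .rc (.ax4 A B) (.ax3 A B)

lemma hderEmpty {A : Fml} (h : HDer E0 ∅ A) : HThm E0 A := by
  induction h with
  | hyp h => exact absurd h (Set.notMem_empty _)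
  | thm h => exact h
  | conj _ _ ih1 ih2 => exact .conj ih1 ih2
  | mp _ h2 ih => exact .mp ih h2

/-- separation lemma: deduction-like property for restricted Hilbert derivability -/
lemma sep {Γ : Set Fml} {A C : Fml} (h : HDer E0 (insert A Γ) C) :
    HDer E0 Γ C ∨ HThm E0 (A.imp C) ∨
      ∃ D, HDer E0 Γ D ∧ HThm E0 ((A.and D).imp C) := by
  induction h with
  | @hyp B hB =>
      rw [Set.mem_insert_iff] at hB
      rcases hB with rfl | hB
      · exact Or.inr (Or.inl (.ax8 _))
      · exact Or.inl (.hyp hB)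
  | thm h => exact Or.inl (.thm h)
  | conj _ _ ih1 ih2 =>
      rcases ih1 with h1 | h1 | ⟨D1, hD1, h1⟩ <;>
        rcases ih2 with h2 | h2 | ⟨D2, hD2, h2⟩
      · exact Or.inl (.conj h1 h2)
      · exact Or.inr (Or.inr ⟨_, h1, .rc (.ax4 _ _) (.tr (.ax3 _ _) h2)⟩)
      · exact Or.inr (Or.inr ⟨_, .conj h1 hD2,
          .rc (.tr (.ax4 _ _) (.ax3 _ _))
              (.tr (.rc (.ax3 _ _) (.tr (.ax4 _ _) (.ax4 _ _))) h2)⟩)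
      · exact Or.inr (Or.inr ⟨_, h2, .rc (.tr (.ax3 _ _) h1) (.ax4 _ _)⟩)
      · exact Or.inr (Or.inl (.rc h1 h2))
      · exact Or.inr (Or.inr ⟨_, hD2, .rc (.tr (.ax3 _ _) h1) h2⟩)
      · exact Or.inr (Or.inr ⟨_, .conj hD1 h2,
          .rc (.tr (.rc (.ax3 _ _) (.tr (.ax4 _ _) (.ax3 _ _))) h1)
              (.tr (.ax4 _ _) (.ax4 _ _))⟩)
      · exact Or.inr (Or.inr ⟨_, hD1, .rc h1 (.tr (.ax3 _ _) h2)⟩)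
      · exact Or.inr (Or.inr ⟨_, .conj hD1 hD2,
          .rc (.tr (.rc (.ax3 _ _) (.tr (.ax4 _ _) (.ax3 _ _))) h1)
              (.tr (.rc (.ax3 _ _) (.tr (.ax4 _ _) (.ax4 _ _))) h2)⟩)
  | mp _ hthm ih =>
      rcases ih with h1 | h1 | ⟨D, hD, h1⟩
      · exact Or.inl (.mp h1 hthm)
      · exact Or.inr (Or.inl (.tr h1 hthm))
      · exact Or.inr (Or.inr ⟨D, hD, .tr h1 hthm⟩)

/-- deduction theorem for singleton contexts -/
lemma ded {A B : Fml} (h : HDer E0 {A} B) : HThm E0 (A.imp B) := by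
  have h' : HDer E0 (insert A (∅ : Set Fml)) B := by
    rwa [insert_empty_eq]
  rcases sep h' with h1 | h1 | ⟨D, hD, h1⟩
  · exact .af _ (hderEmpty h1)
  · exact h1
  · exact .tr (.rc (.ax8 A) (.af A (hderEmpty hD))) h1

/-- admissibility of ∨E in the restricted Hilbert system -/
lemma orE_adm {Γ : Set Fml} {A B C : Fml} (hAB : HDer E0 Γ (A.or B))
    (h1 : HDer E0 (insert A Γ) C) (h2 : HDer E0 (insert B Γ) C) :
    HDer E0 Γ C := by
  have key : ∀ D : Fml, HDer E0 Γ D → HThm E0 ((A.and D).imp C) →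
      HThm E0 ((B.and D).imp C) → HDer E0 Γ C := by
    intro D hD hA hB
    have t : HThm E0 (((A.or B).and D).imp C) :=
      .tr (thmComm _ _) (.tr (.ax7 D A B)
        (.rd (.tr (thmComm _ _) hA) (.tr (thmComm _ _) hB)))
    exact .mp (.conj hAB hD) t
  rcases sep h1 with g1 | g1 | ⟨D1, hD1, g1⟩
  · exact g1
  · rcases sep h2 with g2 | g2 | ⟨D2, hD2, g2⟩
    · exact g2
    · exact .mp hAB (.rd g1 g2)
    · exact key D2 hD2 (.tr (.ax3 _ _) g1) g2
  · rcases sep h2 with g2 | g2 | ⟨D2, hD2, g2⟩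
    · exact g2
    · exact key D1 hD1 g1 (.tr (.ax3 _ _) g2)
    · exact key (D1.and D2) (.conj hD1 hD2)
        (.tr (.rc (.ax3 _ _) (.tr (.ax4 _ _) (.ax3 _ _))) g1)
        (.tr (.rc (.ax3 _ _) (.tr (.ax4 _ _) (.ax4 _ _))) g2)

lemma ntoH : ∀ {Γ : Set Fml} {A : Fml}, Deriv R0 Γ A → HDer E0 Γ A := by
  intro Γ A d
  induction d with
  | hyp _ _ h => exact .hyp h
  | andI _ _ ih1 ih2 => exact .conj ih1 ih2
  | andE1 _ ih => exact .mp ih (.ax3 _ _)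
  | andE2 _ ih => exact .mp ih (.ax4 _ _)
  | orI1 B _ ih => exact .mp ih (.ax1 _ _)
  | orI2 A _ ih => exact .mp ih (.ax2 _ _)
  | orE _ _ _ ih ih1 ih2 => exact orE_adm ih ih1 ih2
  | botE A _ ih => exact .mp ih (.ax14 _)
  | impI _ ih => exact .thm (ded ih)
  | impE _ _ ih1 ih2 => exact .mp ih1 (hderEmpty ih2)
  | @impI1 _ A' B' D' _ _ _ ih1 ih2 =>
      have h : HThm E0 ((A'.imp B').biimp (A'.imp D')) :=
        .re (.conj (.ax8 A') (.ax8 A')) (.conj (ded ih1) (ded ih2))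
      exact .thm (.mp h (.ax3 _ _))
  | @impI2 _ A' B' D' _ _ _ ih1 ih2 =>
      have h : HThm E0 ((B'.imp A').biimp (D'.imp A')) :=
        .re (.conj (ded ih1) (ded ih2)) (.conj (.ax8 A') (.ax8 A'))
      exact .thm (.mp h (.ax3 _ _))
  | impIN h => simp at h
  | impIN2 h => simp at h
  | impIChat C h => simp at h
  | @impIDhat _ A B C _ _ ih =>
      have hAB : HThm E0 (A.imp B) := ded ih
      have h1 : HThm E0 ((B.imp C).imp ((A.or B).imp C)) :=
        .mp (.re (.conj (.ax2 A B) (.rd hAB (.ax8 B))) (.conj (.ax8 C) (.ax8 C)))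
          (.ax3 _ _)
      have h2 : HThm E0 (((A.or B).imp C).imp ((A.imp C).and (B.imp C))) :=
        .axDhat A B C rfl
      exact .thm (.tr (.tr h1 h2) (.ax3 _ _))
  | impIAnd h => simp at h
  | impIOr h => simp at h
  | impITr h => simp at h

end AuxWFDhat

theorem hilbert_iff_natded_WFDhat (Γ : Set Fml) (A : Fml) :
    HDer ({ExtAx.Dhat} : Set ExtAx) Γ A ↔ NDer {NRule.impI1, NRule.impI2, NRule.impDhat} Γ A := by
  constructor
  · intro h
    induction h with
    | hyp h => exact ⟨.hyp _ _ h⟩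
    | thm h =>
        obtain ⟨d⟩ := thmToN h
        exact ⟨d.wk (Set.empty_subset _)⟩
    | conj _ _ ih1 ih2 =>
        obtain ⟨d1⟩ := ih1; obtain ⟨d2⟩ := ih2
        exact ⟨.andI d1 d2⟩
    | mp _ h2 ih =>
        obtain ⟨d⟩ := ih; obtain ⟨e⟩ := thmToN h2
        exact ⟨.impE d e⟩
  · rintro ⟨d⟩
    exact ntoH d
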